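/- Let S, T be isometries on a Hilbert space H satisfying the doubly twisted commutation relation S*T = λ̄ T S* for some complex number λ with |λ| = 1. Then the defect projections 1 - SS* and 1 - TT* commute. -/

import Mathlib

/-- For isometries `S, T` on a Hilbert space with `S* T = λ̄ T S*` (|λ| = 1),
the defect projections `1 - S S*` and `1 - T T*` commute. -/
theorem stmt_2 {H : Type*} [NormedAddCommGroup H] [InnerProductSpace ℂ H]
    [CompleteSpace H] (S T : H →L[ℂ] H) (l : ℂ) (hl : ‖l‖ = 1)
    (hS : star S * S = 1) (hT : star T * T = 1)
    (hrel : star S * T = star l • (T * star S)) :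
    (1 - S * star S) * (1 - T * star T) = (1 - T * star T) * (1 - S * star S) := by
  -- scalar facts
  have hls : star l * l = 1 := by
    rw [Complex.star_def, Complex.conj_mul']
    norm_cast
    simp [Complex.normSq_eq_norm_sq, hl]
  have hsl : l * star l = 1 := by rw [mul_comm]; exact hls
  -- adjoint of the relation
  have hrel' : star T * S = l • (S * star T) := by
    have h := congrArg star hrel
    simpa [star_smul, star_mul, star_star] using h
  -- pointwise rewriting helpers
  have hS1 : ∀ X : H →L[ℂ] H, star S * (S * X) = X := fun X => by
    rw [← mul_assoc, hS, one_mul]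
  have hT1 : ∀ X : H →L[ℂ] H, star T * (T * X) = X := fun X => by
    rw [← mul_assoc, hT, one_mul]
  have hrw : ∀ X : H →L[ℂ] H, star T * (S * X) = l • (S * (star T * X)) := fun X => by
    rw [← mul_assoc, hrel', smul_mul_assoc, mul_assoc]
  have hrw' : ∀ X : H →L[ℂ] H, star S * (T * X) = star l • (T * (star S * X)) := fun X => by
    rw [← mul_assoc, hrel, smul_mul_assoc, mul_assoc]
  set X : H →L[ℂ] H := S * (T * (star S * star T)) with hXdef
  have hX : X * X = l • X := by
    rw [hXdef]
    simp only [mul_assoc, mul_smul_comm, smul_mul_assoc, hrw, hS1, hT1, smul_smul]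
  set p : H →L[ℂ] H := S * star S with hpdef
  set q : H →L[ℂ] H := T * star T with hqdef
  have hE : p * q = star l • X := by
    rw [hpdef, hqdef, hXdef]
    simp only [mul_assoc, mul_smul_comm, smul_mul_assoc, hrw']
  have hp : p * p = p := by
    rw [hpdef, mul_assoc, ← mul_assoc (star S), hS, one_mul]
  have hq : q * q = q := by
    rw [hqdef, mul_assoc, ← mul_assoc (star T), hT, one_mul]
  have hpstar : star p = p := by rw [hpdef]; simp [star_mul]
  have hqstar : star q = q := by rw [hqdef]; simp [star_mul]
  -- the product p*q is idempotent
  have he : (p * q) * (p * q) = p * q := by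
    rw [hE, smul_mul_smul_comm, hX, smul_smul, mul_assoc, hls, mul_one]
  have hestar : star (p * q) = q * p := by rw [star_mul, hpstar, hqstar]
  have hrstar : star (q * (p * q)) = q * (p * q) := by
    rw [star_mul, hestar, hqstar, mul_assoc]
  have h_se_e : (q * p) * (p * q) = q * (p * q) := by
    calc (q * p) * (p * q) = q * ((p * p) * q) := by noncomm_ring
      _ = q * (p * q) := by rw [hp]
  have h_re : (q * (p * q)) * (p * q) = q * (p * q) := by
    rw [mul_assoc, he]
  have h_ser : (q * p) * (q * (p * q)) = q * (p * q) := by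
    calc (q * p) * (q * (p * q)) = q * ((p * q) * (p * q)) := by noncomm_ring
      _ = q * (p * q) := by rw [he]
  have h_rr : (q * (p * q)) * (q * (p * q)) = q * (p * q) := by
    calc (q * (p * q)) * (q * (p * q)) = q * (p * ((q * q) * (p * q))) := by noncomm_ring
      _ = q * (p * (q * (p * q))) := by rw [hq]
      _ = q * ((p * q) * (p * q)) := by noncomm_ring
      _ = q * (p * q) := by rw [he]
  have hk : star (p * q - q * (p * q)) * (p * q - q * (p * q)) = 0 := by
    rw [star_sub, hestar, hrstar, sub_mul, mul_sub, mul_sub,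
      h_se_e, h_ser, h_re, h_rr]
    abel
  have her : p * q = q * (p * q) :=
    sub_eq_zero.mp ((CStarRing.star_mul_self_eq_zero_iff _).mp hk)
  have hsa : star (p * q) = p * q := by
    calc star (p * q) = star (q * (p * q)) := by rw [← her]
      _ = q * (p * q) := hrstar
      _ = p * q := her.symm
  have hcomm : p * q = q * p := by rw [← hsa, hestar]
  calc (1 - p) * (1 - q) = 1 - q - p + p * q := by noncomm_ring
    _ = 1 - p - q + q * p := by rw [hcomm]; abel
    _ = (1 - q) * (1 - p) := by noncomm_ring
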